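/- Take a_n = 1/(100 n³) and N = 4. Then for every integer k ≥ 1 and every constant C > 0 there exists a function f : [0,1) → ℝ of bounded variation with Var(f) + sup_{x∈[0,1)}|f(x)| ≤ 3 such that Var(Lᵏ f) > C; that is, Lᵏ does not act continuously on the space of bounded variation functions. -/

import Mathlib

open MeasureTheory Set Filter

noncomputable section

namespace Gouezel

/-- `b a n = 4 * ∑_{k=1}^n a_k` (left endpoints of the intervals `I_n`). -/
def b (a : ℕ → ℝ) (n : ℕ) : ℝ := 4 * ∑ k ∈ Finset.range n, a (k + 1)

/-- `b_∞ = 4 * ∑_{n=1}^∞ a_n`. -/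
def binf (a : ℕ → ℝ) : ℝ := 4 * ∑' n : ℕ, a (n + 1)

/-- The length `|J| = 1 - b_∞` of the interval `J = [b_∞, 1)`. -/
def lenJ (a : ℕ → ℝ) : ℝ := 1 - binf a

/-- `v_n'(x) = a_n (1 + 2 cos²(2π n⁴ x))`. -/
def vd (a : ℕ → ℝ) (n : ℕ) (x : ℝ) : ℝ :=
  a n * (1 + 2 * Real.cos (2 * Real.pi * (n : ℝ) ^ 4 * x) ^ 2)

/-- `w_n'(x) = a_n (1 + 2 sin²(2π n⁴ x))`. -/
def wd (a : ℕ → ℝ) (n : ℕ) (x : ℝ) : ℝ :=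
  a n * (1 + 2 * Real.sin (2 * Real.pi * (n : ℝ) ^ 4 * x) ^ 2)

/-- The inverse branch `v_n(x) = b_{n-1} + ∫_0^x v_n'(t) dt`. -/
def v (a : ℕ → ℝ) (n : ℕ) (x : ℝ) : ℝ := b a (n - 1) + ∫ t in (0:ℝ)..x, vd a n t

/-- The inverse branch `w_n(x) = b_{n-1} + 2 a_n + ∫_0^x w_n'(t) dt`. -/
def w (a : ℕ → ℝ) (n : ℕ) (x : ℝ) : ℝ :=
  b a (n - 1) + 2 * a n + ∫ t in (0:ℝ)..x, wd a n t

/-- The affine inverse branches `u_j(x) = b_∞ + (j-1)|J|/N + (|J|/N) x`, `1 ≤ j ≤ N`. -/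
def u (a : ℕ → ℝ) (N : ℕ) (j : ℕ) (x : ℝ) : ℝ :=
  binf a + ((j : ℝ) - 1) * (lenJ a / N) + (lenJ a / N) * x

/-- The transfer operator on complex-valued functions. -/
def L (a : ℕ → ℝ) (N : ℕ) (f : ℝ → ℂ) (x : ℝ) : ℂ :=
  (∑' n : ℕ, ((vd a (n + 1) x : ℂ) * f (v a (n + 1) x)
      + (wd a (n + 1) x : ℂ) * f (w a (n + 1) x)))
    + ((lenJ a / (N : ℝ) : ℝ) : ℂ) * ∑ j ∈ Finset.range N, f (u a N (j + 1) x)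

/-- The transfer operator on real-valued functions. -/
def LR (a : ℕ → ℝ) (N : ℕ) (f : ℝ → ℝ) (x : ℝ) : ℝ :=
  (∑' n : ℕ, (vd a (n + 1) x * f (v a (n + 1) x) + wd a (n + 1) x * f (w a (n + 1) x)))
    + (lenJ a / N) * ∑ j ∈ Finset.range N, f (u a N (j + 1) x)

/-- The part `L_n` of the transfer operator coming from the branches `v_n, w_n`. -/
def Ln (a : ℕ → ℝ) (n : ℕ) (f : ℝ → ℂ) (x : ℝ) : ℂ :=
  (vd a n x : ℂ) * f (v a n x) + (wd a n x : ℂ) * f (w a n x)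

/-- Sup norm of `f` on `[0,1)`. -/
def supNorm (f : ℝ → ℂ) : ℝ := ⨆ x : Ico (0:ℝ) 1, ‖f x.1‖

/-- Best Lipschitz constant of `f` on `[0,1)` (the term at `x = y` is `0/0 = 0`). -/
def lipConst (f : ℝ → ℂ) : ℝ :=
  ⨆ p : Ico (0:ℝ) 1 × Ico (0:ℝ) 1, ‖f p.1.1 - f p.2.1‖ / |p.1.1 - p.2.1|

/-- Lipschitz norm `‖f‖_Lip = sup|f| + Lip(f)` on `[0,1)`. -/
def lipNorm (f : ℝ → ℂ) : ℝ := supNorm f + lipConst f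

/-- `f` is bounded and Lipschitz on `[0,1)`. -/
def BddLip (f : ℝ → ℂ) : Prop :=
  ∃ K : ℝ, (∀ x ∈ Ico (0:ℝ) 1, ‖f x‖ ≤ K) ∧
    ∀ x ∈ Ico (0:ℝ) 1, ∀ y ∈ Ico (0:ℝ) 1, ‖f x - f y‖ ≤ K * |x - y|

/-- The specific choice `a_n = 1/(100 n³)`. -/
def aa (n : ℕ) : ℝ := 1 / (100 * (n : ℝ) ^ 3)

/-- Standing hypotheses on the sequence `(a_n)`: positivity and `∑ a_n < 1/4`. -/
def StdHyp (a : ℕ → ℝ) : Prop :=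
  (∀ n : ℕ, 1 ≤ n → 0 < a n) ∧ Summable (fun n : ℕ => a (n + 1)) ∧
    (∑' n : ℕ, a (n + 1)) < 1 / 4

/-- `T : [0,1) → [0,1)` has the maps `v_n, w_n` (`n ≥ 1`) and `u_j` (`1 ≤ j ≤ N`)
as inverse branches. -/
def InverseBranches (a : ℕ → ℝ) (N : ℕ) (T : ℝ → ℝ) : Prop :=
  MapsTo T (Ico (0:ℝ) 1) (Ico (0:ℝ) 1) ∧
    ∀ x ∈ Ico (0:ℝ) 1,
      (∀ n : ℕ, 1 ≤ n → T (v a n x) = x ∧ T (w a n x) = x) ∧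
      (∀ j : ℕ, 1 ≤ j → j ≤ N → T (u a N j x) = x)

/-! ### Auxiliary material for Statement 16 -/

section Aux16

open Real

lemma aa_nonneg (n : ℕ) : 0 ≤ aa n := by
  unfold aa; positivity

lemma aa_pos (M : ℕ) : 0 < aa (M + 1) := by
  unfold aa
  have : (0:ℝ) < ((M:ℝ) + 1) ^ 3 := by positivity
  rw [show ((M + 1 : ℕ) : ℝ) = (M:ℝ) + 1 by push_cast; ring]
  positivity

lemma summable_aa : Summable (fun n : ℕ => aa (n + 1)) := by
  have h : Summable (fun n : ℕ => 1 / ((n:ℝ)) ^ 3) :=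
    Real.summable_one_div_nat_pow.mpr (by norm_num)
  have h2 : Summable (fun n : ℕ => 1 / ((n:ℝ) + 1) ^ 3) := by
    have h2' := (summable_nat_add_iff (f := fun n : ℕ => 1 / ((n:ℝ)) ^ 3) 1).mpr h
    apply h2'.congr
    intro m
    push_cast
    ring
  have h3 := h2.mul_left (1 / 100)
  apply h3.congr
  intro m
  unfold aa
  rw [show ((m + 1 : ℕ) : ℝ) = (m:ℝ) + 1 by push_cast; ring]
  rw [div_mul_div_comm]
  norm_num

lemma sum_range_aa_le (N : ℕ) :
    ∑ i ∈ Finset.range (N + 1), aa (i + 1) ≤ 3 / 200 - 1 / (100 * ((N:ℝ) + 2)) := by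
  induction N with
  | zero =>
    simp [aa]
    norm_num
  | succ N ih =>
    rw [Finset.sum_range_succ]
    have key : aa (N + 1 + 1) ≤ 1 / (100 * ((N:ℝ) + 2)) - 1 / (100 * ((N:ℝ) + 3)) := by
      unfold aa
      have hN : (0:ℝ) ≤ (N:ℝ) := Nat.cast_nonneg N
      rw [show ((N + 1 + 1 : ℕ) : ℝ) = (N:ℝ) + 2 by push_cast; ring]
      rw [div_sub_div _ _ (by positivity) (by positivity)]
      rw [div_le_div_iff₀ (by positivity) (by positivity)]
      ring_nf
      nlinarith [sq_nonneg ((N:ℝ))]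
    have := add_le_add ih key
    calc ∑ i ∈ Finset.range (N + 1), aa (i + 1) + aa (N + 1 + 1)
        ≤ (3 / 200 - 1 / (100 * ((N:ℝ) + 2))) +
            (1 / (100 * ((N:ℝ) + 2)) - 1 / (100 * ((N:ℝ) + 3))) := this
      _ = 3 / 200 - 1 / (100 * (((N:ℕ)+1:ℕ) + 2 : ℝ)) := by push_cast; ring

lemma tsum_aa_le : (∑' n : ℕ, aa (n + 1)) ≤ 3 / 200 := by
  apply summable_aa.tsum_le_of_sum_range_le
  intro N
  cases N with
  | zero => simp; norm_num
  | succ N =>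
    refine le_trans (sum_range_aa_le N) ?_
    have : (0:ℝ) < 100 * ((N:ℝ) + 2) := by positivity
    have : (0:ℝ) ≤ 1 / (100 * ((N:ℝ) + 2)) := by positivity
    linarith

lemma b_eq (n : ℕ) : b aa n = 4 * ∑ i ∈ Finset.range n, aa (i + 1) := rfl

lemma b_nonneg (n : ℕ) : 0 ≤ b aa n := by
  rw [b_eq]
  have : 0 ≤ ∑ i ∈ Finset.range n, aa (i + 1) :=
    Finset.sum_nonneg fun i _ => aa_nonneg _
  linarith

lemma b_succ (n : ℕ) : b aa (n + 1) = b aa n + 4 * aa (n + 1) := by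
  rw [b_eq, b_eq, Finset.sum_range_succ]; ring

lemma b_mono : Monotone (b aa) := by
  apply monotone_nat_of_le_succ
  intro n
  rw [b_succ]
  have := aa_nonneg (n + 1)
  linarith

lemma b_le_binf (n : ℕ) : b aa n ≤ binf aa := by
  rw [b_eq]
  unfold binf
  have := summable_aa.sum_le_tsum (Finset.range n) (fun i _ => aa_nonneg (i + 1))
  linarith

lemma b_lt_binf (n : ℕ) : b aa n < binf aa := by
  have h1 : b aa n < b aa (n + 1) := by
    rw [b_succ]; have := aa_pos n; linarith
  exact lt_of_lt_of_le h1 (b_le_binf _)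

lemma binf_nonneg : 0 ≤ binf aa := le_trans (b_nonneg 0) (b_le_binf 0)

lemma binf_le : binf aa ≤ 3 / 50 := by
  unfold binf
  have := tsum_aa_le
  linarith

/-- `r = |J|/4`. -/
def rr : ℝ := lenJ aa / 4

lemma lenJ_ge : 47 / 50 ≤ lenJ aa := by
  unfold lenJ; have := binf_le; linarith

lemma lenJ_le_one : lenJ aa ≤ 1 := by
  unfold lenJ; have := binf_nonneg; linarith

lemma rr_pos : 0 < rr := by unfold rr; have := lenJ_ge; linarith

lemma rr_ge : 1 / 5 ≤ rr := by unfold rr; have := lenJ_ge; linarith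

lemma rr_le : rr ≤ 1 / 4 := by unfold rr; have := lenJ_le_one; linarith

lemma binf_add_rr_le_one : binf aa + rr ≤ 1 := by
  unfold rr lenJ; have := lenJ_ge; unfold lenJ at this; linarith

end Aux16

section Aux16b

open Real

/-- The frequency `c_n = 4 π n⁴`. -/
def cc (n : ℕ) : ℝ := 4 * Real.pi * (n : ℝ) ^ 4

lemma cc_pos (M : ℕ) : 0 < cc (M + 1) := by
  unfold cc
  have h : (0:ℝ) < ((M + 1 : ℕ) : ℝ) := by exact_mod_cast Nat.succ_pos M
  have := Real.pi_pos
  positivity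

lemma vd_eq (n : ℕ) (x : ℝ) : vd aa n x = aa n * (2 + Real.cos (cc n * x)) := by
  unfold vd cc
  rw [show 4 * Real.pi * (n:ℝ) ^ 4 * x = 2 * (2 * Real.pi * (n:ℝ) ^ 4 * x) by ring,
    Real.cos_two_mul]
  ring

lemma wd_eq (n : ℕ) (x : ℝ) : wd aa n x = aa n * (2 - Real.cos (cc n * x)) := by
  unfold wd cc
  rw [show 4 * Real.pi * (n:ℝ) ^ 4 * x = 2 * (2 * Real.pi * (n:ℝ) ^ 4 * x) by ring,
    Real.cos_two_mul, Real.sin_sq]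
  ring

lemma vd_cont (n : ℕ) : Continuous (vd aa n) := by
  unfold vd; fun_prop

lemma wd_cont (n : ℕ) : Continuous (wd aa n) := by
  unfold wd; fun_prop

lemma hasDeriv_Fv (M : ℕ) (t : ℝ) :
    HasDerivAt (fun s => aa (M+1) * (2 * s + Real.sin (cc (M+1) * s) / cc (M+1)))
      (vd aa (M+1) t) t := by
  have hc := cc_pos M
  have h1 : HasDerivAt (fun s : ℝ => cc (M+1) * s) (cc (M+1)) t := by
    simpa using (hasDerivAt_id t).const_mul (cc (M+1))
  have h2 : HasDerivAt (fun s : ℝ => Real.sin (cc (M+1) * s))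
      (Real.cos (cc (M+1) * t) * cc (M+1)) t := (Real.hasDerivAt_sin _).comp t h1
  have h3 := h2.div_const (cc (M+1))
  have h4 : HasDerivAt (fun s : ℝ => 2 * s) 2 t := by
    simpa using (hasDerivAt_id t).const_mul (2:ℝ)
  have h5 := (h4.add h3).const_mul (aa (M+1))
  refine h5.congr_deriv ?_
  rw [vd_eq]
  field_simp

lemma hasDeriv_Fw (M : ℕ) (t : ℝ) :
    HasDerivAt (fun s => aa (M+1) * (2 * s - Real.sin (cc (M+1) * s) / cc (M+1)))
      (wd aa (M+1) t) t := by
  have hc := cc_pos M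
  have h1 : HasDerivAt (fun s : ℝ => cc (M+1) * s) (cc (M+1)) t := by
    simpa using (hasDerivAt_id t).const_mul (cc (M+1))
  have h2 : HasDerivAt (fun s : ℝ => Real.sin (cc (M+1) * s))
      (Real.cos (cc (M+1) * t) * cc (M+1)) t := (Real.hasDerivAt_sin _).comp t h1
  have h3 := h2.div_const (cc (M+1))
  have h4 : HasDerivAt (fun s : ℝ => 2 * s) 2 t := by
    simpa using (hasDerivAt_id t).const_mul (2:ℝ)
  have h5 := (h4.sub h3).const_mul (aa (M+1))
  refine h5.congr_deriv ?_
  rw [wd_eq]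
  field_simp

lemma v_eq (M : ℕ) (x : ℝ) :
    v aa (M+1) x = b aa M + aa (M+1) * (2 * x + Real.sin (cc (M+1) * x) / cc (M+1)) := by
  unfold v
  have hint : IntervalIntegrable (vd aa (M+1)) MeasureTheory.volume 0 x :=
    (vd_cont (M+1)).intervalIntegrable 0 x
  rw [intervalIntegral.integral_eq_sub_of_hasDerivAt (fun t _ => hasDeriv_Fv M t) hint]
  simp

lemma w_eq (M : ℕ) (x : ℝ) :
    w aa (M+1) x = b aa M + 2 * aa (M+1)
      + aa (M+1) * (2 * x - Real.sin (cc (M+1) * x) / cc (M+1)) := by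
  unfold w
  have hint : IntervalIntegrable (wd aa (M+1)) MeasureTheory.volume 0 x :=
    (wd_cont (M+1)).intervalIntegrable 0 x
  rw [intervalIntegral.integral_eq_sub_of_hasDerivAt (fun t _ => hasDeriv_Fw M t) hint]
  simp

lemma sin_cc (n : ℕ) : Real.sin (cc n) = 0 := by
  rw [show cc n = ((4 * n ^ 4 : ℕ) : ℝ) * Real.pi by unfold cc; push_cast; ring]
  exact Real.sin_nat_mul_pi _

lemma cos_cc (n : ℕ) : Real.cos (cc n) = 1 := by
  rw [show cc n = ((2 * n ^ 4 : ℕ) : ℝ) * (2 * Real.pi) by unfold cc; push_cast; ring]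
  exact Real.cos_nat_mul_two_pi _

lemma sin_cc_mul (n : ℕ) (x : ℝ) :
    Real.sin (cc n * x) = - Real.sin (cc n * (1 - x)) := by
  rw [show cc n * x = cc n - cc n * (1 - x) by ring, Real.sin_sub, sin_cc, cos_cc]
  ring

lemma sin_div_bound (M : ℕ) {x : ℝ} (hx0 : 0 ≤ x) :
    |Real.sin (cc (M+1) * x) / cc (M+1)| ≤ x := by
  have hc := cc_pos M
  rw [abs_div, abs_of_pos hc, div_le_iff₀ hc]
  calc |Real.sin (cc (M+1) * x)| ≤ |cc (M+1) * x| := Real.abs_sin_le_abs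
    _ = x * cc (M+1) := by rw [abs_of_nonneg (by positivity)]; ring

lemma v_mem (M : ℕ) {x : ℝ} (hx : x ∈ Ico (0:ℝ) 1) :
    v aa (M+1) x ∈ Ico (b aa M) (b aa M + 2 * aa (M+1)) := by
  obtain ⟨hx0, hx1⟩ := hx
  have ha := aa_pos M
  rw [v_eq]
  have h1 := abs_le.mp (sin_div_bound M hx0)
  constructor
  · nlinarith [h1.1]
  · have ht : (0:ℝ) < 1 - x := by linarith
    have h2 := abs_le.mp (sin_div_bound M (le_of_lt ht))
    rw [sin_cc_mul, neg_div]
    nlinarith [h2.1]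

lemma w_mem (M : ℕ) {x : ℝ} (hx : x ∈ Ico (0:ℝ) 1) :
    w aa (M+1) x ∈ Ico (b aa M + 2 * aa (M+1)) (b aa M + 4 * aa (M+1)) := by
  obtain ⟨hx0, hx1⟩ := hx
  have ha := aa_pos M
  rw [w_eq]
  have h1 := abs_le.mp (sin_div_bound M hx0)
  constructor
  · nlinarith [h1.2]
  · have ht : (0:ℝ) < 1 - x := by linarith
    have h2 := abs_le.mp (sin_div_bound M (le_of_lt ht))
    rw [sin_cc_mul, neg_div]
    nlinarith [h2.2]

lemma v_mem01 (M : ℕ) {x : ℝ} (hx : x ∈ Ico (0:ℝ) 1) :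
    v aa (M+1) x ∈ Ico (0:ℝ) (binf aa) := by
  obtain ⟨h1, h2⟩ := v_mem M hx
  have ha := aa_pos (M+1)
  have hb := b_le_binf (M+1)
  rw [b_succ] at hb
  exact ⟨le_trans (b_nonneg M) h1, by linarith⟩

lemma w_mem01 (M : ℕ) {x : ℝ} (hx : x ∈ Ico (0:ℝ) 1) :
    w aa (M+1) x ∈ Ico (0:ℝ) (binf aa) := by
  obtain ⟨h1, h2⟩ := w_mem M hx
  have ha := aa_pos M
  have hb := b_le_binf (M+1)
  rw [b_succ] at hb
  constructor
  · have := b_nonneg M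
    linarith
  · linarith

lemma u_apply (j : ℕ) (x : ℝ) :
    u aa 4 (j+1) x = binf aa + (j:ℝ) * rr + rr * x := by
  unfold u rr
  push_cast
  ring

lemma u_mem01 (j : ℕ) {x : ℝ} (hx : x ∈ Ico (0:ℝ) 1) (hj : j < 4) :
    u aa 4 (j+1) x ∈ Ico (binf aa) 1 := by
  obtain ⟨hx0, hx1⟩ := hx
  have hr := rr_pos
  rw [u_apply]
  constructor
  · have : (0:ℝ) ≤ (j:ℝ) := Nat.cast_nonneg j
    nlinarith
  · have hj3 : (j:ℝ) ≤ 3 := by exact_mod_cast Nat.lt_succ_iff.mp hj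
    have h4 : binf aa + 4 * rr = 1 := by unfold rr lenJ; ring
    nlinarith

end Aux16b

section Aux16c

open Real

/-- Real indicator of a set. -/
def ind (s : Set ℝ) : ℝ → ℝ := s.indicator fun _ => 1

/-- Left endpoints of the nested intervals. -/
def al (n : ℕ) : ℕ → ℝ
  | 0 => b aa (n - 1)
  | j + 1 => binf aa + rr * al n j

/-- Right endpoints of the nested intervals. -/
def be (n : ℕ) : ℕ → ℝ
  | 0 => b aa (n - 1) + 2 * aa n
  | j + 1 => binf aa + rr * be n j

lemma al_nonneg (M : ℕ) (j : ℕ) : 0 ≤ al (M+1) j := by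
  induction j with
  | zero =>
    show 0 ≤ b aa ((M+1) - 1)
    simpa using b_nonneg M
  | succ j ih =>
    show 0 ≤ binf aa + rr * al (M+1) j
    have := binf_nonneg
    have := rr_pos
    nlinarith

lemma be_lt_one (M : ℕ) (j : ℕ) : be (M+1) j < 1 := by
  induction j with
  | zero =>
    show b aa ((M+1) - 1) + 2 * aa (M+1) < 1
    simp only [Nat.add_sub_cancel]
    have h1 : b aa M + 2 * aa (M+1) < b aa (M+1) := by
      rw [b_succ]; have := aa_pos M; linarith
    have h2 := b_le_binf (M+1)
    have h3 := binf_le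
    linarith
  | succ j ih =>
    show binf aa + rr * be (M+1) j < 1
    have hr := rr_pos
    have h1 : rr * be (M+1) j < rr := by nlinarith
    have := binf_add_rr_le_one
    linarith

lemma al_lt_be (M : ℕ) (j : ℕ) : al (M+1) j < be (M+1) j := by
  induction j with
  | zero =>
    show b aa ((M+1) - 1) < b aa ((M+1) - 1) + 2 * aa (M+1)
    have := aa_pos M
    linarith
  | succ j ih =>
    show binf aa + rr * al (M+1) j < binf aa + rr * be (M+1) j
    have := rr_pos
    nlinarith

lemma binf_lt_one : binf aa < 1 := by
  have := binf_le; linarith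

/-- Peeling off the branch `u₁`. -/
lemma step_u (g : ℝ → ℝ) (c : ℝ) (p q : ℝ) (hp : 0 ≤ p) (hq : q < 1)
    (hg : ∀ y ∈ Ico (0:ℝ) 1, g y = c * ind (Ico (binf aa + rr * p) (binf aa + rr * q)) y)
    {x : ℝ} (hx : x ∈ Ico (0:ℝ) 1) :
    LR aa 4 g x = rr * c * ind (Ico p q) x := by
  have hr := rr_pos
  have hbinf := binf_nonneg
  unfold LR
  have hts : (∑' m : ℕ, (vd aa (m+1) x * g (v aa (m+1) x)
      + wd aa (m+1) x * g (w aa (m+1) x))) = 0 := by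
    have hz : ∀ m : ℕ, vd aa (m+1) x * g (v aa (m+1) x)
        + wd aa (m+1) x * g (w aa (m+1) x) = 0 := by
      intro m
      have hv := v_mem01 m hx
      have hw := w_mem01 m hx
      have hv1 : v aa (m+1) x ∈ Ico (0:ℝ) 1 := ⟨hv.1, lt_trans hv.2 binf_lt_one⟩
      have hw1 : w aa (m+1) x ∈ Ico (0:ℝ) 1 := ⟨hw.1, lt_trans hw.2 binf_lt_one⟩
      rw [hg _ hv1, hg _ hw1]
      have hvz : ind (Ico (binf aa + rr * p) (binf aa + rr * q)) (v aa (m+1) x) = 0 := by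
        apply Set.indicator_of_notMem
        rw [mem_Ico]
        push_neg
        intro habs
        exfalso
        have : v aa (m+1) x < binf aa + rr * p := by nlinarith [hv.2]
        linarith
      have hwz : ind (Ico (binf aa + rr * p) (binf aa + rr * q)) (w aa (m+1) x) = 0 := by
        apply Set.indicator_of_notMem
        rw [mem_Ico]
        push_neg
        intro habs
        exfalso
        have : w aa (m+1) x < binf aa + rr * p := by nlinarith [hw.2]
        linarith
      rw [hvz, hwz]
      ring
    calc (∑' m : ℕ, (vd aa (m+1) x * g (v aa (m+1) x) + wd aa (m+1) x * g (w aa (m+1) x)))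
        = ∑' _ : ℕ, (0:ℝ) := tsum_congr hz
      _ = 0 := tsum_zero
  rw [hts]
  have hsum : ∑ j ∈ Finset.range 4, g (u aa 4 (j+1) x) = c * ind (Ico p q) x := by
    have hu0 : ∀ j : ℕ, j < 4 → u aa 4 (j+1) x ∈ Ico (0:ℝ) 1 := by
      intro j hj
      obtain ⟨h1, h2⟩ := u_mem01 j hx hj
      exact ⟨le_trans hbinf h1, h2⟩
    have huz : ∀ j : ℕ, 1 ≤ j → j < 4 → g (u aa 4 (j+1) x) = 0 := by
      intro j hj1 hj4
      rw [hg _ (hu0 j hj4)]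
      have : ind (Ico (binf aa + rr * p) (binf aa + rr * q)) (u aa 4 (j+1) x) = 0 := by
        apply Set.indicator_of_notMem
        rw [mem_Ico]
        push_neg
        intro _
        rw [u_apply]
        have hj1' : (1:ℝ) ≤ (j:ℝ) := by exact_mod_cast hj1
        have hx0 := hx.1
        nlinarith
      rw [this]
      ring
    have hu1 : g (u aa 4 (0+1) x) = c * ind (Ico p q) x := by
      rw [hg _ (hu0 0 (by norm_num)), u_apply]
      push_cast
      congr 1
      unfold ind
      by_cases hmem : x ∈ Ico p q
      · rw [Set.indicator_of_mem hmem]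
        rw [Set.indicator_of_mem]
        constructor
        · have := mul_le_mul_of_nonneg_left hmem.1 hr.le
          linarith
        · have := mul_lt_mul_of_pos_left hmem.2 hr
          linarith
      · rw [Set.indicator_of_notMem hmem]
        rw [Set.indicator_of_notMem]
        intro habs
        apply hmem
        obtain ⟨ha1, ha2⟩ := habs
        constructor
        · have h' : rr * p ≤ rr * x := by linarith
          exact le_of_mul_le_mul_left h' hr
        · have h' : rr * x < rr * q := by linarith
          exact lt_of_mul_lt_mul_left h' hr.le
    rw [Finset.sum_range_succ, Finset.sum_range_succ, Finset.sum_range_succ,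
      Finset.sum_range_one]
    rw [hu1, huz 1 (by norm_num) (by norm_num), huz 2 (by norm_num) (by norm_num),
      huz 3 (by norm_num) (by norm_num)]
    ring
  rw [hsum]
  have h4 : (lenJ aa / ((4:ℕ):ℝ)) = rr := by unfold rr; norm_num
  rw [h4]
  ring

/-- Peeling off the branch `v_n` in the last step. -/
lemma step_v (g : ℝ → ℝ) (c : ℝ) (M : ℕ)
    (hg : ∀ y ∈ Ico (0:ℝ) 1, g y = c * ind (Ico (b aa M) (b aa M + 2 * aa (M+1))) y)
    {x : ℝ} (hx : x ∈ Ico (0:ℝ) 1) :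
    LR aa 4 g x = c * vd aa (M+1) x := by
  unfold LR
  have hbM := b_nonneg M
  have haM := aa_pos M
  have hts : (∑' m : ℕ, (vd aa (m+1) x * g (v aa (m+1) x)
      + wd aa (m+1) x * g (w aa (m+1) x))) = vd aa (M+1) x * c := by
    have hM : vd aa (M+1) x * g (v aa (M+1) x) + wd aa (M+1) x * g (w aa (M+1) x)
        = vd aa (M+1) x * c := by
      have hv := v_mem M hx
      have hw := w_mem M hx
      have hv01 : v aa (M+1) x ∈ Ico (0:ℝ) 1 := ⟨(v_mem01 M hx).1, lt_trans (v_mem01 M hx).2 binf_lt_one⟩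
      have hw01 : w aa (M+1) x ∈ Ico (0:ℝ) 1 := ⟨(w_mem01 M hx).1, lt_trans (w_mem01 M hx).2 binf_lt_one⟩
      rw [hg _ hv01, hg _ hw01]
      have h1 : ind (Ico (b aa M) (b aa M + 2 * aa (M+1))) (v aa (M+1) x) = 1 :=
        Set.indicator_of_mem hv _
      have h2 : ind (Ico (b aa M) (b aa M + 2 * aa (M+1))) (w aa (M+1) x) = 0 := by
        apply Set.indicator_of_notMem
        rw [mem_Ico]
        push_neg
        intro _
        exact hw.1
      rw [h1, h2]
      ring
    have hother : ∀ m : ℕ, m ≠ M → vd aa (m+1) x * g (v aa (m+1) x)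
        + wd aa (m+1) x * g (w aa (m+1) x) = 0 := by
      intro m hm
      have hv := v_mem m hx
      have hw := w_mem m hx
      have hv01 : v aa (m+1) x ∈ Ico (0:ℝ) 1 := ⟨(v_mem01 m hx).1, lt_trans (v_mem01 m hx).2 binf_lt_one⟩
      have hw01 : w aa (m+1) x ∈ Ico (0:ℝ) 1 := ⟨(w_mem01 m hx).1, lt_trans (w_mem01 m hx).2 binf_lt_one⟩
      rw [hg _ hv01, hg _ hw01]
      have ham := aa_pos m
      rcases Nat.lt_or_ge m M with hlt | hge
      · -- m < M : branches lie strictly to the left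
        have hble : b aa (m+1) ≤ b aa M := b_mono hlt
        rw [b_succ] at hble
        have h1 : ind (Ico (b aa M) (b aa M + 2 * aa (M+1))) (v aa (m+1) x) = 0 := by
          apply Set.indicator_of_notMem
          rw [mem_Ico]; push_neg; intro habs; exfalso
          have := hv.2
          linarith
        have h2 : ind (Ico (b aa M) (b aa M + 2 * aa (M+1))) (w aa (m+1) x) = 0 := by
          apply Set.indicator_of_notMem
          rw [mem_Ico]; push_neg; intro habs; exfalso
          have := hw.2
          linarith
        rw [h1, h2]; ring
      · -- m > M : branches lie to the right
        have hgt : M + 1 ≤ m := by omega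
        have hble : b aa (M+1) ≤ b aa m := b_mono hgt
        rw [b_succ] at hble
        have h1 : ind (Ico (b aa M) (b aa M + 2 * aa (M+1))) (v aa (m+1) x) = 0 := by
          apply Set.indicator_of_notMem
          rw [mem_Ico]; push_neg; intro _
          have := hv.1
          linarith
        have h2 : ind (Ico (b aa M) (b aa M + 2 * aa (M+1))) (w aa (m+1) x) = 0 := by
          apply Set.indicator_of_notMem
          rw [mem_Ico]; push_neg; intro _
          have := hw.1
          linarith
        rw [h1, h2]; ring
    rw [tsum_eq_single M hother]
    exact hM
  rw [hts]
  have hsum : ∑ j ∈ Finset.range 4, g (u aa 4 (j+1) x) = 0 := by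
    apply Finset.sum_eq_zero
    intro j hj
    have hj4 : j < 4 := Finset.mem_range.mp hj
    obtain ⟨h1, h2⟩ := u_mem01 j hx hj4
    have hu01 : u aa 4 (j+1) x ∈ Ico (0:ℝ) 1 := ⟨le_trans binf_nonneg h1, h2⟩
    rw [hg _ hu01]
    have hz : ind (Ico (b aa M) (b aa M + 2 * aa (M+1))) (u aa 4 (j+1) x) = 0 := by
      apply Set.indicator_of_notMem
      rw [mem_Ico]; push_neg; intro _
      have hb1 := b_le_binf (M+1)
      rw [b_succ] at hb1
      linarith
    rw [hz]; ring
  rw [hsum]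
  ring

lemma iter_eq (M K : ℕ) :
    ∀ j i, j + i = K → ∀ x ∈ Ico (0:ℝ) 1,
      (LR aa 4)^[j] (ind (Ico (al (M+1) K) (be (M+1) K))) x
        = rr ^ j * ind (Ico (al (M+1) i) (be (M+1) i)) x := by
  intro j
  induction j with
  | zero =>
    intro i hi x hx
    obtain rfl : i = K := by omega
    simp
  | succ j IH =>
    intro i hij x hx
    rw [Function.iterate_succ_apply']
    have hstep := step_u ((LR aa 4)^[j] (ind (Ico (al (M+1) K) (be (M+1) K)))) (rr ^ j)
      (al (M+1) i) (be (M+1) i) (al_nonneg M i) (be_lt_one M i)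
      (fun y hy => IH (i+1) (by omega) y hy) hx
    rw [hstep]
    ring

lemma iter_final (M K : ℕ) {x : ℝ} (hx : x ∈ Ico (0:ℝ) 1) :
    (LR aa 4)^[K+1] (ind (Ico (al (M+1) K) (be (M+1) K))) x
      = rr ^ K * vd aa (M+1) x := by
  rw [Function.iterate_succ_apply']
  apply step_v _ _ M _ hx
  intro y hy
  have h := iter_eq M K K 0 (by omega) y hy
  have e1 : al (M+1) 0 = b aa M := by show b aa ((M+1)-1) = b aa M; simp
  have e2 : be (M+1) 0 = b aa M + 2 * aa (M+1) := by
    show b aa ((M+1)-1) + 2 * aa (M+1) = _; simp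
  rw [e1, e2] at h
  exact h

end Aux16c

section Aux16d

open Real
open scoped ENNReal NNReal

lemma cos_pi_nat (i : ℕ) : Real.cos ((i:ℝ) * Real.pi) = (-1:ℝ) ^ i := by
  have h := Real.cos_nat_mul_pi_sub 0 i
  simpa using h

lemma vd_at (M i : ℕ) :
    vd aa (M+1) ((i:ℝ) / (4 * ((M:ℝ)+1) ^ 4)) = aa (M+1) * (2 + (-1:ℝ) ^ i) := by
  rw [vd_eq]
  have hM : ((M:ℝ)+1) ^ 4 ≠ 0 := by positivity
  rw [show cc (M+1) * ((i:ℝ) / (4 * ((M:ℝ)+1) ^ 4)) = (i:ℝ) * Real.pi by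
    unfold cc; push_cast; field_simp]
  rw [cos_pi_nat]

lemma evar_lower (M K : ℕ) :
    ENNReal.ofReal ((4 * ((M:ℝ)+1) ^ 4 - 1) * (2 * rr ^ K * aa (M+1)))
      ≤ eVariationOn (fun x => rr ^ K * vd aa (M+1) x) (Ico (0:ℝ) 1) := by
  have hr := rr_pos
  have ha := aa_pos M
  set Q : ℕ := 4 * (M+1) ^ 4 with hQdef
  have hQpos : 0 < Q := by positivity
  have hQR : ((Q:ℕ):ℝ) = 4 * ((M:ℝ)+1) ^ 4 := by rw [hQdef]; push_cast; ring
  have hQRpos : (0:ℝ) < (Q:ℝ) := by exact_mod_cast hQpos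
  set useq : ℕ → ℝ := fun i : ℕ => ((min i (Q-1) : ℕ) : ℝ) / (Q:ℝ) with huseq
  have hmono : Monotone useq := by
    intro i j hij
    have h2 : ((min i (Q-1) : ℕ) : ℝ) ≤ ((min j (Q-1) : ℕ) : ℝ) := by
      exact_mod_cast min_le_min hij le_rfl
    simp only [huseq]
    gcongr
  have hmem : ∀ i, useq i ∈ Ico (0:ℝ) 1 := by
    intro i
    simp only [huseq]
    constructor
    · positivity
    · rw [div_lt_one hQRpos]
      have : min i (Q-1) < Q := by
        have := min_le_right i (Q-1); omega
      exact_mod_cast this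
  have hsum := eVariationOn.sum_le (f := fun x => rr ^ K * vd aa (M+1) x) (n := Q-1) hmono hmem
  refine le_trans (le_of_eq ?_) hsum
  have hstep : ∀ i ∈ Finset.range (Q-1),
      edist ((fun x => rr ^ K * vd aa (M+1) x) (useq (i+1)))
        ((fun x => rr ^ K * vd aa (M+1) x) (useq i))
      = ENNReal.ofReal (2 * rr ^ K * aa (M+1)) := by
    intro i hi
    have hiQ : i < Q - 1 := Finset.mem_range.mp hi
    have e1 : useq i = (i:ℝ) / (Q:ℝ) := by
      simp only [huseq]
      rw [min_eq_left (by omega : i ≤ Q - 1)]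
    have e2 : useq (i+1) = ((i+1:ℕ):ℝ) / (Q:ℝ) := by
      simp only [huseq]
      rw [min_eq_left (by omega : i + 1 ≤ Q - 1)]
    have hv1 : vd aa (M+1) (useq i) = aa (M+1) * (2 + (-1:ℝ) ^ i) := by
      rw [e1, show ((Q:ℕ):ℝ) = 4 * ((M:ℝ)+1) ^ 4 from hQR]
      exact vd_at M i
    have hv2 : vd aa (M+1) (useq (i+1)) = aa (M+1) * (2 + (-1:ℝ) ^ (i+1)) := by
      rw [e2]
      rw [show ((Q:ℕ):ℝ) = 4 * ((M:ℝ)+1) ^ 4 from hQR]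
      exact vd_at M (i+1)
    simp only
    rw [hv1, hv2, edist_dist, Real.dist_eq]
    have hrK : (0:ℝ) < rr ^ K := pow_pos hr K
    rcases Nat.even_or_odd i with he | ho
    · have h1 : (-1:ℝ) ^ i = 1 := he.neg_one_pow
      have h2 : (-1:ℝ) ^ (i+1) = -1 := (he.add_one).neg_one_pow
      rw [h1, h2]
      rw [show rr ^ K * (aa (M+1) * (2 + -1)) - rr ^ K * (aa (M+1) * (2 + 1))
          = -(2 * rr ^ K * aa (M+1)) by ring]
      rw [abs_neg, abs_of_nonneg (by positivity)]
    · have h1 : (-1:ℝ) ^ i = -1 := ho.neg_one_pow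
      have h2 : (-1:ℝ) ^ (i+1) = 1 := (ho.add_one).neg_one_pow
      rw [h1, h2]
      rw [show rr ^ K * (aa (M+1) * (2 + 1)) - rr ^ K * (aa (M+1) * (2 + -1))
          = 2 * rr ^ K * aa (M+1) by ring]
      rw [abs_of_nonneg (by positivity)]
  rw [Finset.sum_congr rfl hstep, Finset.sum_const, Finset.card_range]
  rw [nsmul_eq_mul]
  rw [show ((Q - 1 : ℕ) : ℝ≥0∞) = ENNReal.ofReal ((Q - 1 : ℕ) : ℝ) from
    (ENNReal.ofReal_natCast _).symm]
  rw [← ENNReal.ofReal_mul (by positivity)]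
  congr 1
  have hcast : ((Q - 1 : ℕ) : ℝ) = (Q:ℝ) - 1 := by
    rw [Nat.cast_sub hQpos]; norm_num
  rw [hcast, hQR]

lemma ind_nonneg (s : Set ℝ) (y : ℝ) : 0 ≤ ind s y := by
  unfold ind
  by_cases h : y ∈ s <;> simp [Set.indicator_apply, h]

lemma ind_le_one (s : Set ℝ) (y : ℝ) : ind s y ≤ 1 := by
  unfold ind
  by_cases h : y ∈ s <;> simp [Set.indicator_apply, h]

lemma ind_Ici_mono (p : ℝ) : Monotone (ind (Ici p)) := by
  intro y z hyz
  unfold ind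
  by_cases hy : y ∈ Ici p
  · have hz : z ∈ Ici p := le_trans hy hyz
    rw [Set.indicator_of_mem hy, Set.indicator_of_mem hz]
  · rw [Set.indicator_of_notMem hy]
    by_cases hz : z ∈ Ici p <;> simp [Set.indicator_apply, hz]

lemma ico_ind_split (p q : ℝ) (hpq : p ≤ q) (y : ℝ) :
    ind (Ico p q) y = ind (Ici p) y - ind (Ici q) y := by
  unfold ind
  by_cases h1 : p ≤ y <;> by_cases h2 : q ≤ y
  · have hm : y ∉ Ico p q := fun hmem => absurd hmem.2 (not_lt.mpr h2)
    rw [Set.indicator_of_notMem hm, Set.indicator_of_mem (mem_Ici.mpr h1),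
      Set.indicator_of_mem (mem_Ici.mpr h2)]
    norm_num
  · have hm : y ∈ Ico p q := ⟨h1, not_le.mp h2⟩
    rw [Set.indicator_of_mem hm, Set.indicator_of_mem (mem_Ici.mpr h1),
      Set.indicator_of_notMem (by rwa [mem_Ici])]
    norm_num
  · exact absurd (le_trans hpq h2) h1
  · have hm : y ∉ Ico p q := fun hmem => h1 hmem.1
    rw [Set.indicator_of_notMem hm, Set.indicator_of_notMem (by rwa [mem_Ici]),
      Set.indicator_of_notMem (by rwa [mem_Ici])]
    norm_num

lemma telescope_var (g : ℝ → ℝ) (hg : Monotone g) (h0 : ∀ y, 0 ≤ g y) (h1 : ∀ y, g y ≤ 1)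
    (m : ℕ) (useq : ℕ → ℝ) (hu : Monotone useq) :
    ∑ i ∈ Finset.range m, edist (g (useq (i+1))) (g (useq i)) ≤ 1 := by
  have hterm : ∀ i, edist (g (useq (i+1))) (g (useq i))
      = ENNReal.ofReal (g (useq (i+1)) - g (useq i)) := by
    intro i
    rw [edist_dist, Real.dist_eq, abs_of_nonneg (sub_nonneg.mpr (hg (hu (Nat.le_succ i))))]
  rw [Finset.sum_congr rfl (fun i _ => hterm i)]
  rw [← ENNReal.ofReal_sum_of_nonneg (fun i _ => sub_nonneg.mpr (hg (hu (Nat.le_succ i))))]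
  rw [Finset.sum_range_sub (fun i => g (useq i))]
  calc ENNReal.ofReal (g (useq m) - g (useq 0))
      ≤ ENNReal.ofReal 1 := ENNReal.ofReal_le_ofReal (by linarith [h0 (useq 0), h1 (useq m)])
    _ = 1 := ENNReal.ofReal_one

lemma evar_ind_le (p q : ℝ) (hpq : p ≤ q) :
    eVariationOn (ind (Ico p q)) (Ico (0:ℝ) 1) ≤ 2 := by
  apply iSup_le
  rintro ⟨m, useq, humono, hus⟩
  have hterm : ∀ i ∈ Finset.range m,
      edist (ind (Ico p q) (useq (i+1))) (ind (Ico p q) (useq i))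
      ≤ edist (ind (Ici p) (useq (i+1))) (ind (Ici p) (useq i))
        + edist (ind (Ici q) (useq (i+1))) (ind (Ici q) (useq i)) := by
    intro i _
    rw [ico_ind_split p q hpq, ico_ind_split p q hpq]
    rw [edist_dist, edist_dist, edist_dist, Real.dist_eq, Real.dist_eq, Real.dist_eq]
    rw [← ENNReal.ofReal_add (abs_nonneg _) (abs_nonneg _)]
    apply ENNReal.ofReal_le_ofReal
    have : ind (Ici p) (useq (i+1)) - ind (Ici q) (useq (i+1))
        - (ind (Ici p) (useq i) - ind (Ici q) (useq i))
        = (ind (Ici p) (useq (i+1)) - ind (Ici p) (useq i))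
          - (ind (Ici q) (useq (i+1)) - ind (Ici q) (useq i)) := by ring
    rw [this]
    exact abs_sub _ _
  calc ∑ i ∈ Finset.range m, edist (ind (Ico p q) (useq (i+1))) (ind (Ico p q) (useq i))
      ≤ ∑ i ∈ Finset.range m,
          (edist (ind (Ici p) (useq (i+1))) (ind (Ici p) (useq i))
            + edist (ind (Ici q) (useq (i+1))) (ind (Ici q) (useq i))) :=
        Finset.sum_le_sum hterm
    _ = (∑ i ∈ Finset.range m, edist (ind (Ici p) (useq (i+1))) (ind (Ici p) (useq i)))
        + ∑ i ∈ Finset.range m, edist (ind (Ici q) (useq (i+1))) (ind (Ici q) (useq i)) :=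
        Finset.sum_add_distrib
    _ ≤ 1 + 1 := add_le_add
        (telescope_var _ (ind_Ici_mono p) (ind_nonneg _) (ind_le_one _) m useq humono)
        (telescope_var _ (ind_Ici_mono q) (ind_nonneg _) (ind_le_one _) m useq humono)
    _ = 2 := by norm_num

lemma sup_ind_le (p q : ℝ) :
    (⨆ x : Ico (0:ℝ) 1, ENNReal.ofReal |ind (Ico p q) x.1|) ≤ 1 := by
  apply iSup_le
  intro x
  have h1 := ind_nonneg (Ico p q) x.1
  have h2 := ind_le_one (Ico p q) x.1
  calc ENNReal.ofReal |ind (Ico p q) x.1| ≤ ENNReal.ofReal 1 :=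
      ENNReal.ofReal_le_ofReal (by rw [abs_of_nonneg h1]; exact h2)
    _ = 1 := ENNReal.ofReal_one

end Aux16d

/-- with `a_n = 1/(100 n³)` and `N = 4`, for every `k ≥ 1` and `C > 0`
there is `f` of bounded variation with `Var(f) + sup|f| ≤ 3` and `Var(L^k f) > C`. -/
theorem stmt16 :
    ∀ k : ℕ, 1 ≤ k → ∀ C : ℝ, 0 < C → ∃ f : ℝ → ℝ,
      eVariationOn f (Ico (0:ℝ) 1) + (⨆ x : Ico (0:ℝ) 1, ENNReal.ofReal |f x.1|) ≤ 3 ∧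
      ENNReal.ofReal C < eVariationOn ((LR aa 4)^[k] f) (Ico (0:ℝ) 1) := by
  intro k hk C hC
  obtain ⟨K, rfl⟩ : ∃ K, k = K + 1 := ⟨k - 1, by omega⟩
  obtain ⟨M, hM⟩ := exists_nat_gt (C * 50 * 5 ^ K / 3)
  refine ⟨ind (Ico (al (M+1) K) (be (M+1) K)), ?_, ?_⟩
  · calc eVariationOn (ind (Ico (al (M+1) K) (be (M+1) K))) (Ico (0:ℝ) 1)
        + (⨆ x : Ico (0:ℝ) 1, ENNReal.ofReal |ind (Ico (al (M+1) K) (be (M+1) K)) x.1|)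
        ≤ 2 + 1 := add_le_add (evar_ind_le _ _ (al_lt_be M K).le) (sup_ind_le _ _)
      _ = 3 := by norm_num
  · have heq : eVariationOn ((LR aa 4)^[K+1] (ind (Ico (al (M+1) K) (be (M+1) K))))
        (Ico (0:ℝ) 1) = eVariationOn (fun x => rr ^ K * vd aa (M+1) x) (Ico (0:ℝ) 1) :=
      eVariationOn.eq_of_eqOn (fun x hx => iter_final M K hx)
    rw [heq]
    refine lt_of_lt_of_le ?_ (evar_lower M K)
    have hm0 : (0:ℝ) ≤ (M:ℝ) := Nat.cast_nonneg M
    have hm1 : (1:ℝ) ≤ (M:ℝ) + 1 := by linarith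
    have h5K : (0:ℝ) < 5 ^ K := by positivity
    have hr := rr_pos
    have hrK : (1/5:ℝ) ^ K ≤ rr ^ K := pow_le_pow_left₀ (by norm_num) rr_ge K
    have hrKpos : (0:ℝ) < rr ^ K := pow_pos hr K
    have haa : aa (M+1) = 1 / (100 * ((M:ℝ)+1) ^ 3) := by
      unfold aa; push_cast; ring
    have hm4 : (1:ℝ) ≤ ((M:ℝ)+1) ^ 4 := by
      have := pow_le_pow_left₀ (zero_le_one) hm1 4
      simpa using this
    have e1 : 3 * ((M:ℝ)+1) / (50 * 5 ^ K)
        = (3 * ((M:ℝ)+1) ^ 4) * (2 * (1/5:ℝ) ^ K * (1 / (100 * ((M:ℝ)+1) ^ 3))) := by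
      rw [div_pow, one_pow]
      have hmne : ((M:ℝ)+1) ^ 3 ≠ 0 := by positivity
      field_simp
      ring
    have h4 : 3 * ((M:ℝ)+1) ^ 4 ≤ 4 * ((M:ℝ)+1) ^ 4 - 1 := by nlinarith
    have hstep : 3 * ((M:ℝ)+1) / (50 * 5 ^ K)
        ≤ (4 * ((M:ℝ)+1) ^ 4 - 1) * (2 * rr ^ K * aa (M+1)) := by
      rw [e1, haa]
      apply mul_le_mul h4 ?_ (by positivity) (by linarith)
      gcongr
    have hC2 : C < 3 * ((M:ℝ)+1) / (50 * 5 ^ K) := by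
      rw [lt_div_iff₀ (by positivity)]
      rw [div_lt_iff₀ (by norm_num : (0:ℝ) < 3)] at hM
      nlinarith
    have hkey : C < (4 * ((M:ℝ)+1) ^ 4 - 1) * (2 * rr ^ K * aa (M+1)) :=
      lt_of_lt_of_le hC2 hstep
    rw [ENNReal.ofReal_lt_ofReal_iff (lt_trans hC hkey)]
    exact hkey

end Gouezel
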